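/- Let G be a subfilter of a filter F in an MR-algebra such that G ∨ (G→F) = F (G is F-Boolean). Then (G→F)→F = G (G is weakly F-Boolean). -/
import Mathlib


namespace CubicPaper

/-- Existence of the binary meet of `a` and `b`. -/
def MeetExists {L : Type*} [SemilatticeSup L] (a b : L) : Prop :=
  ∃ m : L, IsGLB ({a, b} : Set L) m

/-- A cubic algebra: join semilattice with top `⊤` and a (totalized) binary
operation `delta`, whose axioms are only assumed where the paper defines them. -/
structure CubicAlgebra (L : Type*) [SemilatticeSup L] [OrderTop L] where
  delta : L → L → L
  op : L → L → L
  op_def : ∀ x y : L, op x y = delta ⊤ (delta (x ⊔ y) y) ⊔ y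
  ax_a : ∀ x y : L, x ≤ y → delta y x ⊔ x = y
  ax_b : ∀ x y z : L, x ≤ y → y ≤ z →
    delta z (delta y x) = delta (delta z y) (delta z x)
  ax_c : ∀ x y : L, x ≤ y → delta y (delta y x) = x
  ax_d : ∀ x y z : L, x ≤ y → y ≤ z → delta z x ≤ delta z y
  ax_e : ∀ x y : L, op (op x y) y = x ⊔ y
  ax_f : ∀ x y z : L, op x (op y z) = op y (op x z)

namespace CubicAlgebra

variable {L : Type*} [SemilatticeSup L] [OrderTop L]

/-- `a ≼ b` iff `Δ(a ⊔ b, a) ≤ b`. -/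
def preceq (C : CubicAlgebra L) (a b : L) : Prop := C.delta (a ⊔ b) a ≤ b

/-- `a ≃ b` iff `Δ(a ⊔ b, a) = b`. -/
def csim (C : CubicAlgebra L) (a b : L) : Prop := C.delta (a ⊔ b) a = b

/-- The MR axiom: for `a, b < x`, `Δ(x,a) ⊔ b < x` iff `a ⊓ b` does not exist. -/
def IsMR (C : CubicAlgebra L) : Prop :=
  ∀ a b x : L, a < x → b < x → (C.delta x a ⊔ b < x ↔ ¬ MeetExists a b)

/-- A filter: nonempty, upward closed, closed under existing binary meets. -/
def CFilter (F : Set L) : Prop :=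
  F.Nonempty ∧ (∀ a b : L, a ∈ F → a ≤ b → b ∈ F) ∧
    (∀ a b m : L, a ∈ F → b ∈ F → IsGLB ({a, b} : Set L) m → m ∈ F)

/-- The filter generated by a set: intersection of all filters containing it. -/
def filterGen (S : Set L) : Set L := ⋂₀ {T : Set L | CFilter T ∧ S ⊆ T}

/-- The subalgebra generated by a filter `F`: `{Δ(x,y) : y ≤ x, x,y ∈ F}`. -/
def gen (C : CubicAlgebra L) (F : Set L) : Set L :=
  {z : L | ∃ x ∈ F, ∃ y ∈ F, y ≤ x ∧ z = C.delta x y}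

/-- `F_g = {Δ(g ⊔ f, f) : f ∈ F}`. -/
def shift (C : CubicAlgebra L) (F : Set L) (g : L) : Set L :=
  {z : L | ∃ f ∈ F, z = C.delta (g ⊔ f) f}

/-- For filters `A ⊆ B`, `A → B = {x ∈ B : ∀ a ∈ A, x ⊔ a = ⊤}`. -/
def arrow (A B : Set L) : Set L := {x : L | x ∈ B ∧ ∀ a ∈ A, x ⊔ a = ⊤}

/-- `Δ(G, F) = Δ(𝟏, G→F) ∨ G`, as a generated filter. -/
def deltaF (C : CubicAlgebra L) (G F : Set L) : Set L :=
  filterGen ((C.delta ⊤ '' arrow G F) ∪ G)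

/-- `G` is `F`-Boolean iff `G ∨ (G→F) = F`. -/
def FBoolean (F G : Set L) : Prop :=
  filterGen (G ∪ arrow G F) = F

end CubicAlgebra

end CubicPaper

namespace CubicPaper
open CubicAlgebra

section Aux

variable {L : Type*} [SemilatticeSup L] [OrderTop L] (C : CubicAlgebra L)

lemma aux_delta_le {x y : L} (h : y ≤ x) : C.delta x y ≤ x :=
  le_sup_left.trans (C.ax_a y x h).le

lemma aux_delta_self (x : L) : C.delta x x = x := by
  have h1 : C.delta x x ≤ x := aux_delta_le C le_rfl
  have h2 := C.ax_b x x x le_rfl le_rfl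
  have h3 := C.ax_c x x le_rfl
  have h4 : C.delta (C.delta x x) (C.delta x x) ≤ C.delta x x :=
    aux_delta_le C le_rfl
  refine le_antisymm h1 ?_
  calc x = C.delta x (C.delta x x) := h3.symm
  _ = C.delta (C.delta x x) (C.delta x x) := h2
  _ ≤ C.delta x x := h4

lemma aux_op_ge (x y : L) : y ≤ C.op x y := by
  rw [C.op_def]; exact le_sup_right

lemma aux_op_self (a : L) : C.op a a = ⊤ := by
  rw [C.op_def, sup_idem, aux_delta_self]
  exact C.ax_a a ⊤ le_top

lemma aux_op_of_le {x y : L} (h : x ≤ y) : C.op x y = ⊤ := by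
  rw [C.op_def, sup_eq_right.mpr h, aux_delta_self]
  exact C.ax_a y ⊤ le_top

lemma aux_op_top (y : L) : C.op ⊤ y = y := by
  rw [C.op_def, top_sup_eq, C.ax_c y ⊤ le_top, sup_idem]

lemma aux_le_of_op_top {x y : L} (h : C.op x y = ⊤) : x ≤ y := by
  have e := C.ax_e x y
  rw [h, aux_op_top C y] at e
  exact le_sup_left.trans e.symm.le

lemma aux_op_sup_self (x y : L) : C.op x y ⊔ x = ⊤ := by
  rw [C.op_def]
  have ht : C.delta (x ⊔ y) y ≤ x ⊔ y := aux_delta_le C le_sup_right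
  have h2 : C.delta ⊤ (C.delta (x ⊔ y) y) ⊔ C.delta (x ⊔ y) y = ⊤ :=
    C.ax_a _ ⊤ le_top
  apply top_unique
  refine h2.ge.trans (sup_le (le_sup_left.trans le_sup_left) (ht.trans ?_))
  exact sup_le le_sup_right (le_sup_right.trans le_sup_left)

lemma aux_op_antitone {x y : L} (h : x ≤ y) (z : L) : C.op y z ≤ C.op x z := by
  apply aux_le_of_op_top
  rw [C.ax_f (C.op y z) x z, C.ax_e]
  exact aux_op_of_le C (h.trans le_sup_left)

lemma aux_op_mono {y z : L} (h : y ≤ z) (x : L) : C.op x y ≤ C.op x z := by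
  apply aux_le_of_op_top
  have e0 : C.op (C.op z y) y = z := by
    rw [C.ax_e, sup_eq_left.mpr h]
  have e1 : C.op (C.op x y) z = C.op (C.op z y) (x ⊔ y) := by
    conv_lhs => rw [← e0]
    rw [C.ax_f (C.op x y) (C.op z y) y, C.ax_e]
  rw [C.ax_f (C.op x y) x z, e1]
  exact aux_op_of_le C (le_sup_left.trans (aux_op_ge C _ _))

lemma aux_le_op_swap {x y z : L} (h : x ≤ C.op y z) : y ≤ C.op x z :=
  aux_le_of_op_top C ((C.ax_f y x z).trans (aux_op_of_le C h))

lemma aux_dneg {a x : L} (h : a ≤ x) : C.op (C.op x a) a = x := by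
  rw [C.ax_e, sup_eq_left.mpr h]

lemma aux_sectInf_le_left {a x y : L} (hx : a ≤ x) :
    C.op (C.op x a ⊔ C.op y a) a ≤ x := by
  have h := aux_op_antitone C (le_sup_left : C.op x a ≤ C.op x a ⊔ C.op y a) a
  rwa [aux_dneg C hx] at h

lemma aux_sectInf_le_right {a x y : L} (hy : a ≤ y) :
    C.op (C.op x a ⊔ C.op y a) a ≤ y := by
  have h := aux_op_antitone C (le_sup_right : C.op y a ≤ C.op x a ⊔ C.op y a) a
  rwa [aux_dneg C hy] at h

lemma aux_le_sectInf {a u x y : L} (hu : a ≤ u) (h1 : u ≤ x) (h2 : u ≤ y) :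
    u ≤ C.op (C.op x a ⊔ C.op y a) a := by
  have e3 : C.op x a ⊔ C.op y a ≤ C.op u a :=
    sup_le (aux_op_antitone C h1 a) (aux_op_antitone C h2 a)
  have h := aux_op_antitone C e3 a
  rwa [aux_dneg C hu] at h

lemma aux_le_of_neg_sup {a g Z : L} (hg : a ≤ g) (hZ : a ≤ Z)
    (h : C.op g a ⊔ Z = ⊤) : g ≤ Z := by
  have h1 : C.op (C.op (C.op g a) Z) Z = ⊤ := (C.ax_e _ _).trans h
  have h2 : C.op (C.op g a) Z ≤ Z := aux_le_of_op_top C h1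
  have h3 : g ≤ C.op (C.op g a) Z := aux_le_op_swap C (aux_op_mono C hZ g)
  exact h3.trans h2

lemma aux_sectInf_sup_neg_le {a Z Cc : L} (hZ : a ≤ Z) (hC : a ≤ Cc) :
    C.op (C.op (Z ⊔ Cc) a ⊔ C.op (C.op Z a) a) a ≤ Cc := by
  set X := C.op (Z ⊔ Cc) a ⊔ C.op (C.op Z a) a with hX
  have haX : a ≤ X := (aux_op_ge C _ _).trans le_sup_left
  apply aux_le_of_neg_sup C (aux_op_ge C X a) hC
  rw [aux_dneg C haX, hX, aux_dneg C hZ, sup_assoc]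
  exact aux_op_sup_self C (Z ⊔ Cc) a

lemma aux_core {a Z Cc D : L} (hZ : a ≤ Z) (hC : a ≤ Cc) (hD : a ≤ D)
    (hmeet : C.op (C.op Cc a ⊔ C.op D a) a = a) :
    C.op (C.op (Z ⊔ Cc) a ⊔ C.op (Z ⊔ D) a) a ≤ Z := by
  set g := C.op (C.op (Z ⊔ Cc) a ⊔ C.op (Z ⊔ D) a) a with hgdef
  have hag : a ≤ g := aux_op_ge C _ _
  set w := C.op (C.op g a ⊔ C.op (C.op Z a) a) a with hwdef
  have haw : a ≤ w := aux_op_ge C _ _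
  have hw_g : w ≤ g := aux_sectInf_le_left C hag
  have hw_Z' : w ≤ C.op Z a := aux_sectInf_le_right C (aux_op_ge C Z a)
  have hg_ZC : g ≤ Z ⊔ Cc := aux_sectInf_le_left C (hZ.trans le_sup_left)
  have hg_ZD : g ≤ Z ⊔ D := aux_sectInf_le_right C (hZ.trans le_sup_left)
  have hwC : w ≤ Cc :=
    (aux_le_sectInf C haw (hw_g.trans hg_ZC) hw_Z').trans
      (aux_sectInf_sup_neg_le C hZ hC)
  have hwD : w ≤ D :=
    (aux_le_sectInf C haw (hw_g.trans hg_ZD) hw_Z').trans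
      (aux_sectInf_sup_neg_le C hZ hD)
  have hwa : w = a :=
    le_antisymm ((aux_le_sectInf C haw hwC hwD).trans_eq hmeet) haw
  have hZZ : C.op (C.op Z a) a = Z := aux_dneg C hZ
  rw [hwdef, hZZ] at hwa
  have hX : a ≤ C.op g a ⊔ Z := (aux_op_ge C g a).trans le_sup_left
  have h4 : C.op g a ⊔ Z = ⊤ := by
    have hd := aux_dneg C hX
    rw [hwa] at hd
    rw [← hd]
    exact aux_op_self C a
  exact aux_le_of_neg_sup C hag hZ h4

include C in
lemma aux_isGLB_sup {m w z1 z2 : L} (hmw : m ≤ w)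
    (hglb : IsGLB ({z1, z2} : Set L) m) :
    IsGLB ({w ⊔ z1, w ⊔ z2} : Set L) w := by
  have hmz1 : m ≤ z1 := hglb.1 (Set.mem_insert _ _)
  have hmz2 : m ≤ z2 := hglb.1 (Set.mem_insert_of_mem _ rfl)
  constructor
  · rintro t ht
    rcases ht with rfl | ht
    · exact le_sup_left
    · rw [Set.mem_singleton_iff] at ht
      subst ht; exact le_sup_left
  · intro u hu
    have hu1 : u ≤ w ⊔ z1 := hu (Set.mem_insert _ _)
    have hu2 : u ≤ w ⊔ z2 := hu (Set.mem_insert_of_mem _ rfl)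
    have hlb : C.op (C.op z1 m ⊔ C.op z2 m) m ∈ lowerBounds ({z1, z2} : Set L) := by
      rintro t ht
      rcases ht with rfl | ht
      · exact aux_sectInf_le_left C hmz1
      · rw [Set.mem_singleton_iff] at ht
        subst ht; exact aux_sectInf_le_right C hmz2
    have hmeet : C.op (C.op z1 m ⊔ C.op z2 m) m = m :=
      le_antisymm (hglb.2 hlb) (aux_op_ge C _ m)
    have hcore := aux_core C hmw hmz1 hmz2 hmeet
    have hu0 : u ⊔ w ≤ C.op (C.op (w ⊔ z1) m ⊔ C.op (w ⊔ z2) m) m :=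
      aux_le_sectInf C (hmw.trans le_sup_right)
        (sup_le hu1 le_sup_left) (sup_le hu2 le_sup_left)
    exact le_sup_left.trans (hu0.trans hcore)

end Aux

theorem stmt17 {L : Type*} [SemilatticeSup L] [OrderTop L] (C : CubicAlgebra L)
    (hMR : C.IsMR) (F G : Set L) (hF : CFilter F) (hG : CFilter G)
    (hGF : G ⊆ F) (hBool : FBoolean F G) :
    arrow (arrow G F) F = G := by
  classical
  set H : Set L := arrow G F with hH
  set T : Set L := {z : L | ∀ w : L, z ≤ w → (∀ h ∈ H, w ⊔ h = ⊤) → w ∈ G} with hT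
  obtain ⟨g0, hg0⟩ := hG.1
  have htopG : (⊤ : L) ∈ G := hG.2.1 g0 ⊤ hg0 le_top
  have hTfilter : CFilter T := by
    refine ⟨⟨⊤, ?_⟩, ?_, ?_⟩
    · intro w hw _
      have : w = ⊤ := top_unique hw
      rw [this]; exact htopG
    · intro p q hp hpq
      intro w hw harr
      exact hp w (hpq.trans hw) harr
    · intro p q m hp hq hglb
      intro w hw harr
      have h1 : w ⊔ p ∈ G := by
        refine hp (w ⊔ p) le_sup_right ?_
        intro h hh
        rw [sup_right_comm, harr h hh, top_sup_eq]
      have h2 : w ⊔ q ∈ G := by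
        refine hq (w ⊔ q) le_sup_right ?_
        intro h hh
        rw [sup_right_comm, harr h hh, top_sup_eq]
      exact hG.2.2 (w ⊔ p) (w ⊔ q) w h1 h2 (aux_isGLB_sup C hw hglb)
  have hGT : G ⊆ T := by
    intro g hg
    intro w hw _
    exact hG.2.1 g w hg hw
  have hHT : H ⊆ T := by
    intro h hh
    intro w hw harr
    have hwh : w ⊔ h = ⊤ := harr h hh
    rw [sup_eq_left.mpr hw] at hwh
    rw [hwh]; exact htopG
  have hBool' : filterGen (G ∪ arrow G F) = F := hBool
  have hFT : F ⊆ T := by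
    rw [← hBool']
    intro x hx
    exact Set.mem_sInter.mp hx T ⟨hTfilter, Set.union_subset hGT hHT⟩
  ext x
  constructor
  · rintro ⟨hxF, hxarr⟩
    exact hFT hxF x le_rfl hxarr
  · intro hxG
    refine ⟨hGF hxG, ?_⟩
    rintro h ⟨hhF, hharr⟩
    rw [sup_comm]
    exact hharr x hxG

end CubicPaper
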